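/- Let h : ℝ → ℝ be continuous, L_h-periodic and positive, let γ > 0, and let f, φ : [0,1] → ℝ be continuous. Define the concentrated functional on the flat strip S^ε = {(x,y) : 0 < x < 1, 1 - ε^γ h(x/ε^β) < y < 1} (for ε small so that ε^γ max h < 1). Then (1/ε^γ)∫_{S^ε} f(x)φ(x) dx dy → ⟨h⟩_{(0,L_h)} ∫_0^1 f(x)φ(x) dx as ε → 0⁺. -/

import Mathlib

open MeasureTheory Set Filter Topology

set_option maxHeartbeats 1000000 in
lemma avg_tendsto (h : ℝ → ℝ) (Lh : ℝ) (hLh : 0 < Lh) (hhc : Continuous h)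
    (hhper : Function.Periodic h Lh) (h1 : ℝ) (hh0 : ∀ x, 0 ≤ h x) (hh1 : ∀ x, h x ≤ h1)
    (g : ℝ → ℝ) (hg : ContinuousOn g (Icc 0 1)) :
    Tendsto (fun δ : ℝ => ∫ x in (0:ℝ)..1, g x * h (x / δ)) (𝓝[>] 0)
      (𝓝 (((1 / Lh) * ∫ t in (0:ℝ)..Lh, h t) * ∫ x in (0:ℝ)..1, g x)) := by
  set A : ℝ := (1 / Lh) * ∫ t in (0:ℝ)..Lh, h t with hA
  have hint : ∀ a b : ℝ, IntervalIntegrable h volume a b := fun a b =>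
    hhc.intervalIntegrable a b
  set H : ℝ → ℝ := fun t => (∫ s in (0:ℝ)..t, h s) - t * A with hH
  have hHc : Continuous H :=
    (intervalIntegral.continuous_primitive hint 0).sub (continuous_id.mul continuous_const)
  have hLhA : Lh * A = ∫ t in (0:ℝ)..Lh, h t := by
    rw [hA]; field_simp
  have hHper : Function.Periodic H Lh := by
    intro t
    have h2 : ∫ s in (0:ℝ)..(t + Lh), h s
        = (∫ s in (0:ℝ)..t, h s) + ∫ s in t..(t + Lh), h s :=
      (intervalIntegral.integral_add_adjacent_intervals (hint 0 t) (hint t (t + Lh))).symm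
    have h3 : ∫ s in t..(t + Lh), h s = ∫ s in (0:ℝ)..(0 + Lh), h s :=
      hhper.intervalIntegral_add_eq t 0
    simp only [hH]
    rw [h2, h3, zero_add, ← hLhA]
    ring
  obtain ⟨M, hM⟩ : ∃ M, ∀ t, |H t| ≤ M := by
    rcases (isBounded_iff_forall_norm_le.1
      (hHper.isBounded_of_continuous hLh.ne' hHc)) with ⟨M, hM⟩
    exact ⟨M, fun t => hM _ (mem_range_self t)⟩
  have hM0 : 0 ≤ M := le_trans (abs_nonneg _) (hM 0)
  have key : ∀ a b δ : ℝ, δ ≠ 0 →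
      (∫ x in a..b, h (x / δ)) = δ * (H (b / δ) - H (a / δ)) + (b - a) * A := by
    intro a b δ hδ
    rw [intervalIntegral.integral_comp_div (f := h) hδ]
    have h4 : ∫ x in a / δ..b / δ, h x
        = (∫ x in (0:ℝ)..(b / δ), h x) - ∫ x in (0:ℝ)..(a / δ), h x :=
      (intervalIntegral.integral_interval_sub_left (hint 0 (b / δ)) (hint 0 (a / δ))).symm
    rw [h4]
    simp only [hH, smul_eq_mul]
    field_simp
    ring
  have keyBound : ∀ a b δ : ℝ, 0 < δ →
      |(∫ x in a..b, h (x / δ)) - (b - a) * A| ≤ 2 * M * δ := by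
    intro a b δ hδ
    rw [key a b δ hδ.ne', add_sub_cancel_right, abs_mul, abs_of_pos hδ]
    have h5 : |H (b / δ) - H (a / δ)| ≤ 2 * M := by
      have hb := abs_le.1 (hM (b / δ))
      have ha := abs_le.1 (hM (a / δ))
      rw [abs_le]; constructor <;> linarith
    calc δ * |H (b / δ) - H (a / δ)| ≤ δ * (2 * M) :=
          mul_le_mul_of_nonneg_left h5 hδ.le
      _ = 2 * M * δ := by ring
  have h1nn : 0 ≤ h1 := le_trans (hh0 0) (hh1 0)
  rw [Metric.tendsto_nhdsWithin_nhds]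
  intro ε hε
  set ε₁ : ℝ := ε / (4 * (h1 + |A| + 1)) with hε₁def
  have hden : (0:ℝ) < 4 * (h1 + |A| + 1) := by positivity
  have hε₁ : 0 < ε₁ := div_pos hε hden
  have huc := isCompact_Icc.uniformContinuousOn_of_continuous hg
  rw [Metric.uniformContinuousOn_iff] at huc
  obtain ⟨η, hη0, hucc⟩ := huc ε₁ hε₁
  obtain ⟨n, hn⟩ := exists_nat_one_div_lt hη0
  set N : ℕ := n + 1 with hNdef
  have hNpos : (0:ℝ) < (N : ℝ) := by positivity
  have hNη : 1 / (N : ℝ) < η := by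
    rw [hNdef]; push_cast; exact hn
  set a : ℕ → ℝ := fun k => (k : ℝ) / N with hadef
  have ha0 : a 0 = 0 := by simp [hadef]
  have haN : a N = 1 := by
    simp only [hadef]; field_simp
  have hamono : ∀ k : ℕ, a k ≤ a (k + 1) := by
    intro k
    simp only [hadef]
    gcongr
    push_cast; linarith
  have hastep : ∀ k : ℕ, a (k + 1) - a k = 1 / N := by
    intro k
    simp only [hadef]
    push_cast
    ring
  have hamem : ∀ k : ℕ, k ≤ N → a k ∈ Icc (0:ℝ) 1 := by
    intro k hk
    constructor
    · positivity
    · simp only [hadef]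
      rw [div_le_one hNpos]
      exact_mod_cast hk
  have hsub : ∀ k : ℕ, k < N → Icc (a k) (a (k + 1)) ⊆ Icc (0:ℝ) 1 := by
    intro k hk
    apply Icc_subset_Icc (hamem k hk.le).1 (hamem (k + 1) hk).2
  -- bound for g
  obtain ⟨B, hB⟩ := isCompact_Icc.exists_bound_of_continuousOn hg
  have hB0 : (0:ℝ) ≤ B := le_trans (norm_nonneg _) (hB 0 (by norm_num))
  -- choice of δ₀
  set δ₀ : ℝ := ε / (2 * (2 * N * B * M + 1)) with hδ₀def
  have hcoef : (0:ℝ) < 2 * N * B * M + 1 := by positivity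
  have hδ₀ : 0 < δ₀ := by
    apply div_pos hε
    positivity
  refine ⟨δ₀, hδ₀, ?_⟩
  intro δ hδmem hδdist
  have hδ : (0:ℝ) < δ := hδmem
  have hδδ₀ : δ < δ₀ := by
    rwa [Real.dist_eq, sub_zero, abs_of_pos hδ] at hδdist
  have hcont2 : Continuous fun x : ℝ => h (x / δ) :=
    hhc.comp (continuous_id.div_const δ)
  have hint2 : ∀ k < N, IntervalIntegrable (fun x => g x * h (x / δ)) volume (a k) (a (k + 1)) := by
    intro k hk
    apply ContinuousOn.intervalIntegrable
    rw [uIcc_of_le (hamono k)]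
    exact (hg.mono (hsub k hk)).mul hcont2.continuousOn
  have hint3 : ∀ k < N, IntervalIntegrable g volume (a k) (a (k + 1)) := by
    intro k hk
    apply ContinuousOn.intervalIntegrable
    rw [uIcc_of_le (hamono k)]
    exact hg.mono (hsub k hk)
  have hs1 : ∫ x in (0:ℝ)..1, g x * h (x / δ)
      = ∑ k ∈ Finset.range N, ∫ x in a k..a (k + 1), g x * h (x / δ) := by
    rw [intervalIntegral.sum_integral_adjacent_intervals hint2, ha0, haN]
  have hs2 : ∫ x in (0:ℝ)..1, g x
      = ∑ k ∈ Finset.range N, ∫ x in a k..a (k + 1), g x := by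
    rw [intervalIntegral.sum_integral_adjacent_intervals hint3, ha0, haN]
  rw [Real.dist_eq]
  have hsplit : (∫ x in (0:ℝ)..1, g x * h (x / δ)) - A * ∫ x in (0:ℝ)..1, g x
      = ∑ k ∈ Finset.range N,
        ((∫ x in a k..a (k + 1), g x * h (x / δ)) - A * ∫ x in a k..a (k + 1), g x) := by
    rw [hs1, hs2, Finset.mul_sum, ← Finset.sum_sub_distrib]
  rw [hsplit]
  set C : ℝ := ε₁ * h1 * (1 / N) + B * (2 * M * δ) + |A| * (ε₁ * (1 / N)) with hCdef
  have hpiece : ∀ k ∈ Finset.range N,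
      |(∫ x in a k..a (k + 1), g x * h (x / δ)) - A * ∫ x in a k..a (k + 1), g x| ≤ C := by
    intro k hk
    rw [Finset.mem_range] at hk
    set u : ℝ := a k with hu
    set v : ℝ := a (k + 1) with hv
    have huv : u ≤ v := hamono k
    have hvu : v - u = 1 / N := hastep k
    have humem : u ∈ Icc (0:ℝ) 1 := hamem k hk.le
    have hIoc : Ioc u v ⊆ Icc (0:ℝ) 1 := fun x hx => hsub k hk (Ioc_subset_Icc_self hx)
    have hucx : ∀ x ∈ Ioc u v, |g x - g u| ≤ ε₁ := by
      intro x hx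
      have hd : dist x u < η := by
        rw [Real.dist_eq, abs_of_pos (sub_pos.2 hx.1)]
        calc x - u ≤ v - u := by linarith [hx.2]
          _ = 1 / N := hvu
          _ < η := hNη
      have := hucc x (hIoc hx) u humem hd
      rw [Real.dist_eq] at this
      exact this.le
    have hc1 : IntervalIntegrable (fun x => h (x / δ)) volume u v :=
      hcont2.intervalIntegrable u v
    have hc2 : IntervalIntegrable (fun _ : ℝ => g u * h (0 / δ)) volume u v :=
      intervalIntegrable_const
    have i1 : ∫ x in u..v, (g x - g u) * h (x / δ)
        = (∫ x in u..v, g x * h (x / δ)) - g u * ∫ x in u..v, h (x / δ) := by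
      have e : ∀ x : ℝ, (g x - g u) * h (x / δ) = g x * h (x / δ) - g u * h (x / δ) := by
        intro x; ring
      simp_rw [e]
      rw [intervalIntegral.integral_sub (g := fun x => g u * h (x / δ)) (hint2 k hk)
        ((continuous_const.mul hcont2).intervalIntegrable u v),
        intervalIntegral.integral_const_mul]
    have i2 : ∫ x in u..v, (g u - g x)
        = g u * (v - u) - ∫ x in u..v, g x := by
      rw [intervalIntegral.integral_sub intervalIntegrable_const (hint3 k hk),
        intervalIntegral.integral_const, smul_eq_mul]
      ring
    have e1 : (∫ x in u..v, g x * h (x / δ)) - A * ∫ x in u..v, g x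
        = (∫ x in u..v, (g x - g u) * h (x / δ))
          + (g u * ((∫ x in u..v, h (x / δ)) - (v - u) * A))
          + (A * ∫ x in u..v, (g u - g x)) := by
      rw [i1, i2]; ring
    have b1 : |∫ x in u..v, (g x - g u) * h (x / δ)| ≤ (ε₁ * h1) * (1 / N) := by
      have := intervalIntegral.norm_integral_le_of_norm_le_const
        (C := ε₁ * h1) (f := fun x => (g x - g u) * h (x / δ)) (a := u) (b := v) ?_
      · rw [Real.norm_eq_abs] at this
        rwa [hvu, abs_of_nonneg (by positivity : (0:ℝ) ≤ 1 / (N:ℝ))] at this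
      · intro x hx
        rw [uIoc_of_le huv] at hx
        rw [Real.norm_eq_abs, abs_mul]
        have h6 : |h (x / δ)| ≤ h1 := by
          rw [abs_of_nonneg (hh0 _)]; exact hh1 _
        exact mul_le_mul (hucx x hx) h6 (abs_nonneg _) hε₁.le
    have b2 : |g u * ((∫ x in u..v, h (x / δ)) - (v - u) * A)| ≤ B * (2 * M * δ) := by
      rw [abs_mul]
      have := hB u humem
      rw [Real.norm_eq_abs] at this
      exact mul_le_mul this (keyBound u v δ hδ) (abs_nonneg _) hB0
    have b3 : |A * ∫ x in u..v, (g u - g x)| ≤ |A| * (ε₁ * (1 / N)) := by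
      rw [abs_mul]
      apply mul_le_mul_of_nonneg_left ?_ (abs_nonneg A)
      have := intervalIntegral.norm_integral_le_of_norm_le_const
        (C := ε₁) (f := fun x => g u - g x) (a := u) (b := v) ?_
      · rw [Real.norm_eq_abs] at this
        rwa [hvu, abs_of_nonneg (by positivity : (0:ℝ) ≤ 1 / (N:ℝ))] at this
      · intro x hx
        rw [uIoc_of_le huv] at hx
        rw [Real.norm_eq_abs, abs_sub_comm]
        exact hucx x hx
    calc |(∫ x in u..v, g x * h (x / δ)) - A * ∫ x in u..v, g x|
        = |(∫ x in u..v, (g x - g u) * h (x / δ))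
          + (g u * ((∫ x in u..v, h (x / δ)) - (v - u) * A))
          + (A * ∫ x in u..v, (g u - g x))| := by rw [e1]
      _ ≤ |(∫ x in u..v, (g x - g u) * h (x / δ))
          + (g u * ((∫ x in u..v, h (x / δ)) - (v - u) * A))|
          + |A * ∫ x in u..v, (g u - g x)| := abs_add_le _ _
      _ ≤ (|∫ x in u..v, (g x - g u) * h (x / δ)|
          + |g u * ((∫ x in u..v, h (x / δ)) - (v - u) * A)|)
          + |A * ∫ x in u..v, (g u - g x)| := by
            exact add_le_add (abs_add_le _ _) le_rfl
      _ ≤ C := by rw [hCdef]; exact add_le_add (add_le_add b1 b2) b3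
  calc |∑ k ∈ Finset.range N,
        ((∫ x in a k..a (k + 1), g x * h (x / δ)) - A * ∫ x in a k..a (k + 1), g x)|
      ≤ ∑ k ∈ Finset.range N,
        |(∫ x in a k..a (k + 1), g x * h (x / δ)) - A * ∫ x in a k..a (k + 1), g x| :=
        Finset.abs_sum_le_sum_abs _ _
    _ ≤ ∑ _k ∈ Finset.range N, C := Finset.sum_le_sum hpiece
    _ = (N : ℝ) * C := by rw [Finset.sum_const, Finset.card_range, nsmul_eq_mul]
    _ < ε := by
        have h7 : (N : ℝ) * (1 / N) = 1 := by
          field_simp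
        have hexp : (N : ℝ) * C = ε₁ * (h1 + |A|) + 2 * N * B * M * δ := by
          calc (N : ℝ) * C
              = ε₁ * h1 * ((N:ℝ) * (1/N)) + 2 * N * B * M * δ
                + |A| * ε₁ * ((N:ℝ) * (1/N)) := by rw [hCdef]; ring
            _ = ε₁ * (h1 + |A|) + 2 * N * B * M * δ := by rw [h7]; ring
        rw [hexp]
        have hb1 : ε₁ * (h1 + |A|) ≤ ε / 4 := by
          rw [hε₁def, div_mul_eq_mul_div, div_le_div_iff₀ hden (by norm_num : (0:ℝ) < 4)]
          nlinarith [abs_nonneg A, hε.le]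
        have hb2 : 2 * (N:ℝ) * B * M * δ < ε / 2 := by
          have hstep1 : 2 * (N:ℝ) * B * M * δ ≤ (2 * N * B * M + 1) * δ := by
            nlinarith [hδ.le]
          have hstep2 : (2 * (N:ℝ) * B * M + 1) * δ < (2 * N * B * M + 1) * δ₀ :=
            mul_lt_mul_of_pos_left hδδ₀ hcoef
          have hstep3 : (2 * (N:ℝ) * B * M + 1) * δ₀ = ε / 2 := by
            rw [hδ₀def]
            field_simp
          linarith
        linarith

set_option maxHeartbeats 1000000 in
lemma strip_integral (h : ℝ → ℝ) (hhc : Continuous h) (h1 : ℝ) (hh0 : ∀ x, 0 ≤ h x)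
    (hh1 : ∀ x, h x ≤ h1) (f φ F : ℝ → ℝ) (hFc : Continuous F) (B : ℝ) (hFB : ∀ x, |F x| ≤ B)
    (hFeq : ∀ x ∈ Icc (0:ℝ) 1, F x = f x * φ x)
    (c δ : ℝ) (hc : 0 < c) (hδ : 0 < δ) :
    (∫ p in {p : ℝ × ℝ | 0 < p.1 ∧ p.1 < 1 ∧ 1 - c * h (p.1 / δ) < p.2 ∧ p.2 < 1}, f p.1 * φ p.1)
      = c * ∫ x in (0:ℝ)..1, F x * h (x / δ) := by
  have hB0 : (0:ℝ) ≤ B := le_trans (abs_nonneg _) (hFB 0)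
  have h10 : (0:ℝ) ≤ h1 := le_trans (hh0 0) (hh1 0)
  set a : ℝ → ℝ := fun x => 1 - c * h (x / δ) with hadef
  have hac : Continuous a :=
    continuous_const.sub (continuous_const.mul (hhc.comp (continuous_id.div_const δ)))
  set S : Set (ℝ × ℝ) :=
    {p : ℝ × ℝ | 0 < p.1 ∧ p.1 < 1 ∧ 1 - c * h (p.1 / δ) < p.2 ∧ p.2 < 1} with hSdef
  have hSm : MeasurableSet S := by
    have hrw : S = ({p : ℝ × ℝ | 0 < p.1} ∩ {p | p.1 < 1})
        ∩ ({p : ℝ × ℝ | a p.1 < p.2} ∩ {p | p.2 < 1}) := by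
      ext p
      simp only [hSdef, hadef, mem_setOf_eq, mem_inter_iff]
      tauto
    rw [hrw]
    exact ((measurableSet_lt measurable_const measurable_fst).inter
        (measurableSet_lt measurable_fst measurable_const)).inter
      ((measurableSet_lt ((hac.measurable).comp measurable_fst) measurable_snd).inter
        (measurableSet_lt measurable_snd measurable_const))
  -- replace f*φ by F on S
  have hcongr : (∫ p in S, f p.1 * φ p.1) = ∫ p in S, F p.1 := by
    apply setIntegral_congr_fun hSm
    rintro ⟨x, y⟩ ⟨hx0, hx1, -, -⟩
    exact (hFeq x ⟨hx0.le, hx1.le⟩).symm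
  rw [hcongr]
  -- integrability of the indicator on the product space
  set R : Set (ℝ × ℝ) := Icc (0:ℝ) 1 ×ˢ Icc (1 - c * h1) 1 with hRdef
  have hRm : MeasurableSet R := measurableSet_Icc.prod measurableSet_Icc
  have hRfin : volume R < ⊤ := (isCompact_Icc.prod isCompact_Icc).measure_lt_top
  have hSR : S ⊆ R := by
    rintro ⟨x, y⟩ ⟨hx0, hx1, hy0, hy1⟩
    refine ⟨⟨hx0.le, hx1.le⟩, ?_, hy1.le⟩
    have : 1 - c * h1 ≤ 1 - c * h (x / δ) := by nlinarith [hh1 (x / δ)]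
    exact le_trans this hy0.le
  have hInd : Integrable (S.indicator fun p : ℝ × ℝ => F p.1) := by
    apply Integrable.mono' (g := R.indicator fun _ => B)
    · exact (integrable_indicator_iff hRm).2 (integrableOn_const hRfin.ne)
    · exact ((hFc.measurable.comp measurable_fst).indicator hSm).aestronglyMeasurable
    · filter_upwards with p
      by_cases hp : p ∈ S
      · rw [indicator_of_mem hp, indicator_of_mem (hSR hp), Real.norm_eq_abs]
        exact hFB _
      · rw [indicator_of_notMem hp, norm_zero]
        exact indicator_nonneg (fun _ _ => hB0) p
  have hInd' : Integrable (S.indicator fun p : ℝ × ℝ => F p.1)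
      ((volume : Measure ℝ).prod volume) := by
    rwa [← Measure.volume_eq_prod ℝ ℝ]
  rw [← integral_indicator hSm]
  have hmeasrw : (∫ p, S.indicator (fun p : ℝ × ℝ => F p.1) p)
      = ∫ p, S.indicator (fun p : ℝ × ℝ => F p.1) p ∂((volume : Measure ℝ).prod volume) := by
    rw [← Measure.volume_eq_prod ℝ ℝ]
  rw [hmeasrw, MeasureTheory.integral_prod _ hInd']
  have hin : ∀ x : ℝ, (∫ y : ℝ, S.indicator (fun p : ℝ × ℝ => F p.1) (x, y))
      = (Ioo (0:ℝ) 1).indicator (fun x => F x * (c * h (x / δ))) x := by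
    intro x
    by_cases hx : x ∈ Ioo (0:ℝ) 1
    · have hxy : ∀ y : ℝ, S.indicator (fun p : ℝ × ℝ => F p.1) (x, y)
          = (Ioo (a x) 1).indicator (fun _ => F x) y := by
        intro y
        by_cases hy : y ∈ Ioo (a x) 1
        · rw [indicator_of_mem hy,
            indicator_of_mem (show (x, y) ∈ S from ⟨hx.1, hx.2, hy.1, hy.2⟩)]
        · rw [indicator_of_notMem hy]
          apply indicator_of_notMem
          intro hc'
          exact hy ⟨hc'.2.2.1, hc'.2.2.2⟩
      simp_rw [hxy]
      rw [MeasureTheory.integral_indicator_const _ measurableSet_Ioo, indicator_of_mem hx,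
        measureReal_def, Real.volume_Ioo, ENNReal.toReal_ofReal
          (by simp only [hadef]; nlinarith [mul_nonneg hc.le (hh0 (x / δ))] : (0:ℝ) ≤ 1 - a x), smul_eq_mul]
      show (1 - (1 - c * h (x / δ))) * F x = F x * (c * h (x / δ))
      ring
    · rw [indicator_of_notMem hx]
      have hzero : ∀ y : ℝ, S.indicator (fun p : ℝ × ℝ => F p.1) (x, y) = 0 := by
        intro y
        apply indicator_of_notMem
        intro hc'
        exact hx ⟨hc'.1, hc'.2.1⟩
      simp_rw [hzero]
      exact integral_zero ℝ ℝ
  simp_rw [hin]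
  rw [integral_indicator measurableSet_Ioo]
  have hfin : (∫ x in Ioo (0:ℝ) 1, F x * (c * h (x / δ)))
      = c * ∫ x in (0:ℝ)..1, F x * h (x / δ) := by
    have e : ∀ x : ℝ, F x * (c * h (x / δ)) = c * (F x * h (x / δ)) := fun x => by ring
    simp_rw [e]
    rw [intervalIntegral.integral_of_le zero_le_one, integral_Ioc_eq_integral_Ioo,
      ← MeasureTheory.integral_const_mul]
  exact hfin

set_option maxHeartbeats 1000000 in
/-- Convergence of concentrated integrals on the oscillating strip
`S^ε = {(x,y) : 0<x<1, 1 - ε^γ h(x/ε^β) < y < 1}`: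
`(1/ε^γ)∫_{S^ε} f(x)φ(x) dxdy → ⟨h⟩ ∫_0^1 fφ` as `ε → 0⁺`. -/
theorem stmt4 (h : ℝ → ℝ) (Lh h1 : ℝ) (hLh : 0 < Lh)
    (hhc : Continuous h) (hhper : ∀ x, h (x + Lh) = h x) (hhpos : ∀ x, 0 < h x)
    (hh1 : ∀ x, h x ≤ h1)
    (γ β : ℝ) (hγ : 0 < γ) (hβ : 0 < β)
    (f φ : ℝ → ℝ) (hf : ContinuousOn f (Icc 0 1)) (hφ : ContinuousOn φ (Icc 0 1)) :
    Tendsto (fun ε : ℝ =>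
        (1 / ε ^ γ) * ∫ p in {p : ℝ × ℝ | 0 < p.1 ∧ p.1 < 1 ∧
            1 - ε ^ γ * h (p.1 / ε ^ β) < p.2 ∧ p.2 < 1}, f p.1 * φ p.1)
      (𝓝[>] 0)
      (𝓝 (((1 / Lh) * ∫ t in (0:ℝ)..Lh, h t) * ∫ x in (0:ℝ)..1, f x * φ x)) := by
  have hh0 : ∀ x, 0 ≤ h x := fun x => (hhpos x).le
  -- clamped version of f * φ
  have hclamp : Continuous fun x : ℝ => min 1 (max 0 x) :=
    continuous_const.min (continuous_const.max continuous_id)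
  have hmem : ∀ x : ℝ, min 1 (max 0 x) ∈ Icc (0:ℝ) 1 := fun x =>
    ⟨le_min zero_le_one (le_max_left 0 x), min_le_left 1 (max 0 x)⟩
  set G : ℝ → ℝ := fun x => f (min 1 (max 0 x)) * φ (min 1 (max 0 x)) with hGdef
  have hGc : Continuous G :=
    (hf.comp_continuous hclamp hmem).mul (hφ.comp_continuous hclamp hmem)
  have hGeq : ∀ x ∈ Icc (0:ℝ) 1, G x = f x * φ x := by
    intro x hx
    simp only [hGdef, max_eq_right hx.1, min_eq_right hx.2]
  obtain ⟨B, hB⟩ := isCompact_Icc.exists_bound_of_continuousOn hGc.continuousOn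
  have hB' : ∀ x, |G x| ≤ B := by
    intro x
    have h1' := hB _ (hmem x)
    rw [Real.norm_eq_abs] at h1'
    have h2' : G x = G (min 1 (max 0 x)) := by
      rw [hGeq _ (hmem x)]
    rwa [← h2'] at h1'
  have hIeq : ∫ x in (0:ℝ)..1, f x * φ x = ∫ x in (0:ℝ)..1, G x :=
    intervalIntegral.integral_congr fun x hx =>
      (hGeq x (by rwa [uIcc_of_le zero_le_one] at hx)).symm
  rw [hIeq]
  have hpow : Tendsto (fun ε : ℝ => ε ^ β) (𝓝[>] (0:ℝ)) (𝓝[>] (0:ℝ)) := by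
    rw [tendsto_nhdsWithin_iff]
    constructor
    · have hcn : ContinuousAt (fun x : ℝ => x ^ β) 0 :=
        Real.continuousAt_rpow_const 0 β (Or.inr hβ.le)
      have h0 : (0:ℝ) ^ β = 0 := Real.zero_rpow hβ.ne'
      have h2 : Tendsto (fun x : ℝ => x ^ β) (𝓝 0) (𝓝 0) := by
        simpa [h0] using hcn.tendsto
      exact h2.mono_left nhdsWithin_le_nhds
    · filter_upwards [self_mem_nhdsWithin] with x hx
      exact Real.rpow_pos_of_pos hx β
  have havg := (avg_tendsto h Lh hLh hhc hhper h1 hh0 hh1 G hGc.continuousOn).comp hpow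
  apply havg.congr'
  filter_upwards [self_mem_nhdsWithin] with ε (hε : ε ∈ Ioi (0:ℝ))
  have hε' : (0:ℝ) < ε := hε
  have hc : 0 < ε ^ γ := Real.rpow_pos_of_pos hε' γ
  have hδ : 0 < ε ^ β := Real.rpow_pos_of_pos hε' β
  show ∫ x in (0:ℝ)..1, G x * h (x / ε ^ β) = _
  rw [strip_integral h hhc h1 hh0 hh1 f φ G hGc B hB' hGeq (ε ^ γ) (ε ^ β) hc hδ,
    one_div, inv_mul_cancel_left₀ hc.ne']
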